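/- Let p be an odd prime and let L be a unimodular quadratic ℤ_p-lattice of rank l, and let T ∈ Sym_n(ℤ_p) with det T ∈ ℤ_p^× and n ≤ l. Then the local representation density at X = 1 satisfies α_p(1, T, L) = p^{n(n+1)/2 - nl} · N, where N is the number of isometric embeddings of the quadratic 𝔽_p-space (ℤ_p^n/p, T mod p) into (L/pL, Q mod p). -/

import Mathlib

open MeasureTheory Filter Matrix

/-- The sequence whose limit is the local representation density `α_p(1, T, L)`:
`α_p(1,T,L) = lim_k p^{k(n(n+1)/2 - nl)} · #{x ∈ (L/p^k L)^n : Q(x) ≡ T mod p^k}`,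
where the quadratic lattice `L` (of rank `card ι`) is described by its Gram matrix `S`
(so that `Q(x) = xᵀ S x`). -/
noncomputable def localDensitySeq (p : ℕ) [Fact p.Prime] {ι : Type} [Fintype ι]
    {n : ℕ} (S : Matrix ι ι ℤ_[p]) (T : Matrix (Fin n) (Fin n) ℤ_[p]) (k : ℕ) : ℝ :=
  (p : ℝ) ^ ((k : ℤ) * ((n * (n + 1) / 2 : ℤ) - (n : ℤ) * Fintype.card ι)) *
    Nat.card {x : Matrix ι (Fin n) (ZMod (p ^ k)) //
      xᵀ * S.map (PadicInt.toZModPow k) * x = T.map (PadicInt.toZModPow k)}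

namespace LocalDensityAux

set_option linter.unusedSectionVars false
set_option linter.unusedVariables false

theorem padic_hom_unique {p : ℕ} [Fact p.Prime] (f g : ℤ_[p] →+* ZMod p) : f = g := by
  ext z
  obtain ⟨c, hc⟩ := Ideal.mem_span_singleton'.mp (PadicInt.appr_spec 1 z)
  have hz : z = (z.appr 1 : ℤ_[p]) + c * (p:ℤ_[p])^1 := by linear_combination -hc
  have hf : ∀ (h : ℤ_[p] →+* ZMod p), h z = (z.appr 1 : ZMod p) := by
    intro h
    conv_lhs => rw [hz]
    rw [map_add, _root_.map_mul, map_pow, map_natCast, map_natCast]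
    simp [ZMod.natCast_self]
  rw [hf f, hf g]


theorem card_matrix (m n : ℕ) (R : Type*) [Fintype R] [DecidableEq R] :
    Nat.card (Matrix (Fin m) (Fin n) R) = (Fintype.card R) ^ (m * n) := by
  rw [Nat.card_congr (Matrix.of (m := Fin m) (n := Fin n) (α := R)).symm,
    Nat.card_eq_fintype_card, Fintype.card_fun, Fintype.card_fun,
    Fintype.card_fin, Fintype.card_fin, ← pow_mul, Nat.mul_comm]

def pairEquiv (n : ℕ) : {q : Fin n × Fin n // q.1 ≤ q.2} ≃ Σ j : Fin n, Fin (j+1) where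
  toFun q := ⟨q.1.2, ⟨q.1.1, Nat.lt_succ_of_le q.2⟩⟩
  invFun s := ⟨(⟨s.2.1, lt_of_le_of_lt (Nat.lt_succ_iff.mp s.2.2) s.1.2⟩, s.1),
    Nat.lt_succ_iff.mp s.2.2⟩
  left_inv q := by ext <;> rfl
  right_inv s := by ext <;> rfl

theorem card_pairs (n : ℕ) : Nat.card {q : Fin n × Fin n // q.1 ≤ q.2} = n * (n+1) / 2 := by
  rw [Nat.card_congr (pairEquiv n), Nat.card_eq_fintype_card, Fintype.card_sigma]
  simp only [Fintype.card_fin]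
  rw [Fin.sum_univ_eq_sum_range (fun j => j + 1) n]
  have h2 : (∑ j ∈ Finset.range (n+1), j) * 2 = n * (n+1) := by
    rw [Finset.sum_range_id_mul_two]; simp [Nat.mul_comm]
  have h3 : ∑ j ∈ Finset.range n, (j+1) = ∑ j ∈ Finset.range (n+1), j := by
    rw [Finset.sum_range_succ_comm, Finset.sum_add_distrib]
    simp [Nat.add_comm]
  omega

def symmEquiv (n : ℕ) (R : Type*) [DecidableEq R] :
    {A : Matrix (Fin n) (Fin n) R // A.IsSymm} ≃ ({q : Fin n × Fin n // q.1 ≤ q.2} → R) where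
  toFun A q := A.1 q.1.1 q.1.2
  invFun f := ⟨Matrix.of (fun i j => if h : i ≤ j then f ⟨(i,j), h⟩ else f ⟨(j,i), le_of_not_ge h⟩), by
    ext i j
    simp only [Matrix.transpose_apply, Matrix.of_apply]
    rcases le_or_gt i j with h | h
    · rcases eq_or_lt_of_le h with rfl | hlt
      · rfl
      · rw [dif_neg (not_le_of_gt hlt), dif_pos h]
    · rw [dif_pos h.le, dif_neg (not_le_of_gt h)]⟩
  left_inv A := by
    ext i j
    simp only [Matrix.of_apply]
    split_ifs with h
    · rfl
    · conv_rhs => rw [← A.2]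
      rfl
  right_inv f := by
    funext q
    simp only [Matrix.of_apply, dif_pos q.2]

theorem card_symm (n : ℕ) (R : Type*) [DecidableEq R] [Fintype R] :
    Nat.card {A : Matrix (Fin n) (Fin n) R // A.IsSymm} =
      (Fintype.card R) ^ (n * (n+1) / 2) := by
  rw [Nat.card_congr (symmEquiv n R), Nat.card_eq_fintype_card, Fintype.card_fun]
  rw [← Nat.card_eq_fintype_card (α := {q : Fin n × Fin n // q.1 ≤ q.2}), card_pairs]

section phi
variable {p l n : ℕ} [Fact p.Prime]

/-- the linear map `z ↦ zᵀN + Nᵀz` as an `AddMonoidHom`. -/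
def phiHom (N : Matrix (Fin l) (Fin n) (ZMod p)) :
    Matrix (Fin l) (Fin n) (ZMod p) →+ Matrix (Fin n) (Fin n) (ZMod p) where
  toFun z := zᵀ * N + Nᵀ * z
  map_zero' := by simp
  map_add' z w := by
    simp only [transpose_add, Matrix.add_mul, Matrix.mul_add]
    abel

theorem phiHom_apply (N z : Matrix (Fin l) (Fin n) (ZMod p)) :
    phiHom N z = zᵀ * N + Nᵀ * z := rfl

theorem phiHom_symm (N z : Matrix (Fin l) (Fin n) (ZMod p)) : (phiHom N z).IsSymm := by
  rw [phiHom_apply, Matrix.IsSymm, transpose_add, transpose_mul, transpose_mul,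
    transpose_transpose, transpose_transpose, add_comm]

theorem phi_surj (hp : p ≠ 2) (N : Matrix (Fin l) (Fin n) (ZMod p))
    (P : Matrix (Fin n) (Fin l) (ZMod p)) (hPN : P * N = 1)
    (C : Matrix (Fin n) (Fin n) (ZMod p)) (hC : C.IsSymm) :
    ∃ z, phiHom N z = C := by
  have h2 : (2 : ZMod p) ≠ 0 := by
    have hdvd : ((2:ℕ) : ZMod p) = 0 ↔ p ∣ 2 := ZMod.natCast_eq_zero_iff 2 p
    intro h
    exact hp ((Nat.prime_dvd_prime_iff_eq (Fact.out) Nat.prime_two).mp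
      (hdvd.mp (by exact_mod_cast h)))
  have h1 : Nᵀ * Pᵀ = 1 := by rw [← transpose_mul, hPN, transpose_one]
  refine ⟨(2 : ZMod p)⁻¹ • (Pᵀ * C), ?_⟩
  rw [phiHom_apply, transpose_smul, transpose_mul, transpose_transpose]
  rw [Matrix.smul_mul, Matrix.mul_smul, Matrix.mul_assoc Cᵀ P N, hPN, Matrix.mul_one,
    ← Matrix.mul_assoc Nᵀ Pᵀ C, h1, Matrix.one_mul, hC, ← add_smul, ← two_mul,
    mul_inv_cancel₀ h2, one_smul]

theorem count_phi (hp : p ≠ 2) (hs : n*(n+1)/2 ≤ n*l)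
    (N : Matrix (Fin l) (Fin n) (ZMod p)) (P : Matrix (Fin n) (Fin l) (ZMod p))
    (hPN : P * N = 1) (C : Matrix (Fin n) (Fin n) (ZMod p)) (hC : C.IsSymm) :
    Nat.card {z : Matrix (Fin l) (Fin n) (ZMod p) // zᵀ * N + Nᵀ * z = C} =
      p ^ (n*l - n*(n+1)/2) := by
  obtain ⟨z₀, hz₀⟩ := phi_surj hp N P hPN C hC
  set φ := phiHom N with hφ
  have e1 : {z : Matrix (Fin l) (Fin n) (ZMod p) // zᵀ * N + Nᵀ * z = C} ≃ φ.ker :=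
    { toFun := fun z => ⟨z.1 - z₀, by
        rw [AddMonoidHom.mem_ker, map_sub, hz₀]
        have hz : φ z.1 = C := z.2
        rw [hz, sub_self]⟩
      invFun := fun w => ⟨w.1 + z₀, by
        have hw : φ w.1 = 0 := w.2
        show φ (w.1 + z₀) = C
        rw [map_add, hw, hz₀, zero_add]⟩
      left_inv := fun z => by simp
      right_inv := fun w => by simp }
  rw [Nat.card_congr e1]
  -- identify the range with symmetric matrices
  have e2 : (φ.range : Type) ≃ {A : Matrix (Fin n) (Fin n) (ZMod p) // A.IsSymm} :=
    Equiv.subtypeEquivRight (fun A => by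
      constructor
      · rintro ⟨y, rfl⟩
        exact phiHom_symm N y
      · intro hA
        obtain ⟨z, hz⟩ := phi_surj hp N P hPN A hA
        exact ⟨z, hz⟩)
  have hrange : Nat.card φ.range = p ^ (n*(n+1)/2) := by
    rw [Nat.card_congr e2, card_symm, ZMod.card]
  have hdom : Nat.card (Matrix (Fin l) (Fin n) (ZMod p)) = p ^ (l*n) := by
    rw [card_matrix, ZMod.card]
  have hsplit : Nat.card (Matrix (Fin l) (Fin n) (ZMod p)) =
      Nat.card φ.range * Nat.card φ.ker := by
    rw [AddSubgroup.card_eq_card_quotient_mul_card_addSubgroup φ.ker]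
    congr 1
    exact Nat.card_congr (QuotientAddGroup.quotientKerEquivRange φ).toEquiv
  rw [hdom, hrange] at hsplit
  have hpos : 0 < p ^ (n*(n+1)/2) := Nat.pow_pos (Fact.out (p := p.Prime)).pos
  refine Nat.eq_of_mul_eq_mul_left hpos ?_
  rw [← hsplit, ← pow_add, Nat.add_sub_cancel' hs, Nat.mul_comm l n]

end phi


section iota
variable {p : ℕ} [Fact p.Prime]

/-- `a ↦ p^k·(lift of a)` from `ZMod p` into `ZMod (p^(k+1))`. -/
def iotaF (k : ℕ) (a : ZMod p) : ZMod (p^(k+1)) := ((p^k * a.val : ℕ) : ZMod (p^(k+1)))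

theorem iotaF_add (k : ℕ) (a b : ZMod p) :
    iotaF k (a + b) = iotaF k a + iotaF k b := by
  have hval : (a + b).val = (a.val + b.val) % p := ZMod.val_add a b
  have key : p^k * a.val + p^k * b.val = p^k * (a+b).val + p^(k+1) * ((a.val + b.val)/p) :=
    calc p^k * a.val + p^k * b.val = p^k * (a.val + b.val) := by ring
    _ = p^k * ((a.val+b.val) % p + p * ((a.val+b.val)/p)) := by rw [Nat.mod_add_div]
    _ = p^k * (a+b).val + p^(k+1) * ((a.val + b.val)/p) := by rw [hval, pow_succ]; ring
  unfold iotaF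
  rw [← Nat.cast_add, key, Nat.cast_add, Nat.cast_mul (p^(k+1)), ZMod.natCast_self,
    zero_mul, add_zero]

def iotaHom (k : ℕ) : ZMod p →+ ZMod (p^(k+1)) where
  toFun := iotaF k
  map_zero' := by unfold iotaF; simp [ZMod.val_zero]
  map_add' := iotaF_add k

theorem iotaF_injective (k : ℕ) : Function.Injective (iotaF (p := p) k) := by
  intro a b hab
  have hp : 0 < p := (Fact.out (p := p.Prime)).pos
  have hpk : 0 < p^k := Nat.pow_pos hp
  unfold iotaF at hab
  rw [ZMod.natCast_eq_natCast_iff] at hab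
  have h1 : p^k * a.val < p^(k+1) := by
    have := ZMod.val_lt a; rw [pow_succ]; nlinarith
  have h2 : p^k * b.val < p^(k+1) := by
    have := ZMod.val_lt b; rw [pow_succ]; nlinarith
  have heq : p^k * a.val = p^k * b.val := by
    unfold Nat.ModEq at hab
    rwa [Nat.mod_eq_of_lt h1, Nat.mod_eq_of_lt h2] at hab
  exact ZMod.val_injective p (Nat.eq_of_mul_eq_mul_left hpk heq)

/-- reduction to `ZMod p` kills `iotaF` when `k ≥ 1`. -/
theorem r1_iotaF (k : ℕ) (hk : 1 ≤ k) (a : ZMod p) :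
    ZMod.castHom (dvd_pow_self p (Nat.succ_ne_zero k)) (ZMod p) (iotaF k a) = 0 := by
  unfold iotaF
  rw [map_natCast, Nat.cast_mul, Nat.cast_pow, ZMod.natCast_self]
  rw [zero_pow (by omega), zero_mul]

/-- reduction to `ZMod (p^k)` kills `iotaF`. -/
theorem rk_iotaF (k : ℕ) (a : ZMod p) :
    ZMod.castHom (pow_dvd_pow p (Nat.le_succ k)) (ZMod (p^k)) (iotaF k a) = 0 := by
  unfold iotaF
  rw [map_natCast, Nat.cast_mul, ZMod.natCast_self, zero_mul]

/-- multiplicativity against the reduction `r₁`. -/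
theorem iotaF_mul (k : ℕ) (hk : 1 ≤ k) (a : ZMod p) (u : ZMod (p^(k+1))) :
    iotaF k a * u =
      iotaF k (a * ZMod.castHom (dvd_pow_self p (Nat.succ_ne_zero k)) (ZMod p) u) := by
  have hu : ((u.val : ℕ) : ZMod (p^(k+1))) = u := ZMod.natCast_rightInverse u
  have hru : ZMod.castHom (dvd_pow_self p (Nat.succ_ne_zero k)) (ZMod p) u
      = ((u.val : ℕ) : ZMod p) := by
    conv_lhs => rw [← hu]
    rw [map_natCast]
  set b := a * ZMod.castHom (dvd_pow_self p (Nat.succ_ne_zero k)) (ZMod p) u with hb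
  have hbval : b.val = (a.val * u.val) % p := by
    rw [hb, hru]
    have : a * ((u.val : ℕ) : ZMod p) = ((a.val * u.val : ℕ) : ZMod p) := by
      rw [Nat.cast_mul, ZMod.natCast_val a, ZMod.cast_id]
    rw [this, ZMod.val_natCast]
  have key : p^k * a.val * u.val = p^k * b.val + p^(k+1) * ((a.val * u.val)/p) := by
    have hx := Nat.mod_add_div (a.val * u.val) p
    rw [hbval]
    zify at hx ⊢
    linear_combination (-(p:ℤ)^k) * hx
  show ((p^k * a.val : ℕ) : ZMod (p^(k+1))) * u = ((p^k * b.val : ℕ) : ZMod (p^(k+1)))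
  conv_lhs => rw [← hu]
  rw [← Nat.cast_mul, key, Nat.cast_add, Nat.cast_mul (p^(k+1)), ZMod.natCast_self,
    zero_mul, add_zero]

/-- surjectivity of `iotaF` onto the kernel of reduction mod `p^k`. -/
theorem iotaF_surj_ker (k : ℕ) (u : ZMod (p^(k+1)))
    (hu : ZMod.castHom (pow_dvd_pow p (Nat.le_succ k)) (ZMod (p^k)) u = 0) :
    ∃ a : ZMod p, iotaF k a = u := by
  have hp : 0 < p := (Fact.out (p := p.Prime)).pos
  have hpk : 0 < p^k := Nat.pow_pos hp
  have huv : ((u.val : ℕ) : ZMod (p^(k+1))) = u := ZMod.natCast_rightInverse u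
  have hdvd : p^k ∣ u.val := by
    rw [← ZMod.natCast_eq_zero_iff]
    rw [← huv, map_natCast] at hu
    exact hu
  obtain ⟨m, hm⟩ := hdvd
  have hmp : m < p := by
    have h5 : u.val < p^k * p := by
      have := ZMod.val_lt u
      calc u.val < p^(k+1) := this
      _ = p^k * p := pow_succ p k
    rw [hm] at h5
    exact Nat.lt_of_mul_lt_mul_left h5
  refine ⟨(m : ZMod p), ?_⟩
  unfold iotaF
  rw [ZMod.val_natCast, Nat.mod_eq_of_lt hmp, ← hm, huv]


theorem iotaF_zero (k : ℕ) : iotaF (p := p) k 0 = 0 := by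
  unfold iotaF; simp [ZMod.val_zero]


section matrixlemmas
variable (k : ℕ)

noncomputable def iotaHom' (k : ℕ) : ZMod p →+ ZMod (p^(k+1)) where
  toFun := iotaF k
  map_zero' := iotaF_zero k
  map_add' := iotaF_add k

theorem mapIota_transpose_mul (hk : 1 ≤ k) {l n m : ℕ}
    (z : Matrix (Fin l) (Fin n) (ZMod p)) (W : Matrix (Fin l) (Fin m) (ZMod (p^(k+1)))) :
    (z.map (iotaF k))ᵀ * W =
      (zᵀ * W.map (ZMod.castHom (dvd_pow_self p (Nat.succ_ne_zero k)) (ZMod p))).map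
        (iotaF k) := by
  ext i j
  simp only [Matrix.mul_apply, Matrix.map_apply, Matrix.transpose_apply]
  calc ∑ m', iotaF k (z m' i) * W m' j
      = ∑ m', iotaF k (z m' i *
          ZMod.castHom (dvd_pow_self p (Nat.succ_ne_zero k)) (ZMod p) (W m' j)) :=
        Finset.sum_congr rfl fun m' _ => iotaF_mul k hk _ _
    _ = iotaF k (∑ m', z m' i *
          ZMod.castHom (dvd_pow_self p (Nat.succ_ne_zero k)) (ZMod p) (W m' j)) :=
        (map_sum (iotaHom' k) _ _).symm

theorem mul_mapIota (hk : 1 ≤ k) {m l n : ℕ}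
    (W : Matrix (Fin m) (Fin l) (ZMod (p^(k+1)))) (z : Matrix (Fin l) (Fin n) (ZMod p)) :
    W * z.map (iotaF k) =
      (W.map (ZMod.castHom (dvd_pow_self p (Nat.succ_ne_zero k)) (ZMod p)) * z).map
        (iotaF k) := by
  ext i j
  simp only [Matrix.mul_apply, Matrix.map_apply]
  calc ∑ m', W i m' * iotaF k (z m' j)
      = ∑ m', iotaF k (ZMod.castHom (dvd_pow_self p (Nat.succ_ne_zero k)) (ZMod p) (W i m')
          * z m' j) := Finset.sum_congr rfl fun m' _ => by
            rw [mul_comm, iotaF_mul k hk, mul_comm]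
    _ = _ := (map_sum (iotaHom' k) _ _).symm

theorem mapIota_inj {l n : ℕ} {A B : Matrix (Fin l) (Fin n) (ZMod p)}
    (h : A.map (iotaF k) = B.map (iotaF k)) : A = B := by
  ext i j
  exact iotaF_injective k (by
    have := congrFun (congrFun h i) j
    exact this)

theorem mapIota_add {l n : ℕ} (A B : Matrix (Fin l) (Fin n) (ZMod p)) :
    (A + B).map (iotaF k) = A.map (iotaF k) + B.map (iotaF k) :=
  Matrix.map_add _ (iotaF_add k) A B

end matrixlemmas


theorem step_card (hp : p ≠ 2) {l n : ℕ} (hn : n ≤ l)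
    (S : Matrix (Fin l) (Fin l) ℤ_[p]) (hS : S.IsSymm)
    (T : Matrix (Fin n) (Fin n) ℤ_[p]) (hT : T.IsSymm) (hTdet : IsUnit T.det)
    (k : ℕ) (hk : 1 ≤ k) :
    Nat.card {x : Matrix (Fin l) (Fin n) (ZMod (p^(k+1))) //
        xᵀ * S.map (PadicInt.toZModPow (k+1)) * x = T.map (PadicInt.toZModPow (k+1))} =
    Nat.card {x : Matrix (Fin l) (Fin n) (ZMod (p^k)) //
        xᵀ * S.map (PadicInt.toZModPow k) * x = T.map (PadicInt.toZModPow k)} *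
      p ^ (n*l - n*(n+1)/2) := by
  classical
  have hs : n*(n+1)/2 ≤ n*l := by
    rcases Nat.eq_zero_or_pos n with h0 | h1
    · subst h0; simp
    · have hmul : n*(n+1) ≤ n*(2*l) := Nat.mul_le_mul_left n (by omega)
      have h2 : n*(2*l) = (n*l)*2 := by ring
      have h3 : n*(n+1)/2 ≤ n*(2*l)/2 := Nat.div_le_div_right hmul
      rwa [h2, Nat.mul_div_cancel _ (by norm_num)] at h3
  set rk : ZMod (p^(k+1)) →+* ZMod (p^k) :=
    ZMod.castHom (pow_dvd_pow p (Nat.le_succ k)) (ZMod (p^k)) with hrkdef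
  set r1 : ZMod (p^(k+1)) →+* ZMod p :=
    ZMod.castHom (dvd_pow_self p (Nat.succ_ne_zero k)) (ZMod p) with hr1def
  set S' := S.map (PadicInt.toZModPow (k+1)) with hS'def
  set T' := T.map (PadicInt.toZModPow (k+1)) with hT'def
  set Sk := S.map (PadicInt.toZModPow k) with hSkdef
  set Tk := T.map (PadicInt.toZModPow k) with hTkdef
  set S1 := S.map (PadicInt.toZMod) with hS1def
  set T1 := T.map (PadicInt.toZMod) with hT1def
  -- compatibilities
  have hcomprk : (⇑rk ∘ ⇑(PadicInt.toZModPow (p := p) (k+1))) = ⇑(PadicInt.toZModPow k) := by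
    funext z
    exact DFunLike.congr_fun (PadicInt.zmod_cast_comp_toZModPow k (k+1) (Nat.le_succ k)) z
  have hcompr1 : (⇑r1 ∘ ⇑(PadicInt.toZModPow (p := p) (k+1))) = ⇑(PadicInt.toZMod) := by
    funext z
    exact DFunLike.congr_fun (padic_hom_unique (r1.comp (PadicInt.toZModPow (k+1)))
      PadicInt.toZMod) z
  have hSrk : S'.map rk = Sk := by rw [hS'def, Matrix.map_map, hcomprk]
  have hTrk : T'.map rk = Tk := by rw [hT'def, Matrix.map_map, hcomprk]
  have hSr1 : S'.map r1 = S1 := by rw [hS'def, Matrix.map_map, hcompr1]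
  have hTr1 : T'.map r1 = T1 := by rw [hT'def, Matrix.map_map, hcompr1]
  have hS'symm : S'.IsSymm := hS.map _
  have hT'symm : T'.IsSymm := hT.map _
  have hS1symm : S1.IsSymm := hS.map _
  have hT1u : IsUnit T1.det := by
    have h := hTdet.map (PadicInt.toZMod (p := p))
    rw [RingHom.map_det, RingHom.mapMatrix_apply] at h
    exact h
  -- reduction of solutions
  set ρ : {x : Matrix (Fin l) (Fin n) (ZMod (p^(k+1))) // xᵀ * S' * x = T'} →
      {x : Matrix (Fin l) (Fin n) (ZMod (p^k)) // xᵀ * Sk * x = Tk} :=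
    fun x => ⟨x.1.map rk, by
      have := congrArg (fun A => A.map (⇑rk)) x.2
      simpa only [Matrix.map_mul, Matrix.transpose_map, hSrk, hTrk] using this⟩ with hρdef
  have key : ∀ xb : {x : Matrix (Fin l) (Fin n) (ZMod (p^k)) // xᵀ * Sk * x = Tk},
      Nat.card {x // ρ x = xb} = p ^ (n*l - n*(n+1)/2) := by
    intro xb
    -- a lift of xb
    set x₀ : Matrix (Fin l) (Fin n) (ZMod (p^(k+1))) :=
      xb.1.map (fun a => ((a.val : ℕ) : ZMod (p^(k+1)))) with hx₀def
    have hx₀rk : x₀.map rk = xb.1 := by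
      ext i j
      simp only [hx₀def, Matrix.map_apply, map_natCast]
      exact ZMod.natCast_rightInverse _
    set x₁ := x₀.map r1 with hx₁def
    set D := T' - x₀ᵀ * S' * x₀ with hDdef
    have hDrk : D.map rk = 0 := by
      have h1 : (x₀ᵀ * S' * x₀).map ⇑rk = (x₀.map rk)ᵀ * S'.map rk * x₀.map rk := by
        simp only [Matrix.map_mul, Matrix.transpose_map]
      have h2 : D.map ⇑rk = T'.map rk - (x₀ᵀ * S' * x₀).map ⇑rk := by
        rw [hDdef]
        exact Matrix.map_sub _ (map_sub rk) _ _
      rw [h2, h1, hx₀rk, hSrk, hTrk, xb.2, sub_self]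
    -- pull D back to ZMod p
    have hDexists : ∀ i j, ∃ a : ZMod p, iotaF k a = D i j := fun i j =>
      iotaF_surj_ker k (D i j) (congrFun (congrFun hDrk i) j)
    set C : Matrix (Fin n) (Fin n) (ZMod p) :=
      Matrix.of (fun i j => Classical.choose (hDexists i j)) with hCdef
    have hCι : C.map (iotaF k) = D := by
      ext i j
      exact Classical.choose_spec (hDexists i j)
    have hDsymm : D.IsSymm := by
      rw [Matrix.IsSymm, hDdef, transpose_sub, hT'symm.eq, transpose_mul, transpose_mul,
        transpose_transpose, hS'symm.eq, Matrix.mul_assoc]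
    have hCsymm : C.IsSymm := by
      apply Matrix.IsSymm.ext
      intro i j
      apply iotaF_injective k
      have h1 := Classical.choose_spec (hDexists i j)
      have h2 := Classical.choose_spec (hDexists j i)
      rw [hCdef]
      show iotaF k (Classical.choose (hDexists j i)) = iotaF k (Classical.choose (hDexists i j))
      rw [h1, h2]
      exact hDsymm.apply i j
    -- mod p solution property of x₁
    have hDr1 : D.map r1 = 0 := by
      rw [← hCι, Matrix.map_map]
      ext i j
      simp only [Matrix.map_apply, Function.comp_apply]
      show r1 (iotaF k (C i j)) = (0 : Matrix (Fin n) (Fin n) (ZMod p)) i j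
      rw [r1_iotaF k hk]
      rfl
    have hsol1 : x₁ᵀ * S1 * x₁ = T1 := by
      have h1 : (x₀ᵀ * S' * x₀).map ⇑r1 = x₁ᵀ * S1 * x₁ := by
        simp only [Matrix.map_mul, Matrix.transpose_map, hSr1, hx₁def]
      have h2 : D.map ⇑r1 = T'.map r1 - (x₀ᵀ * S' * x₀).map ⇑r1 :=
        Matrix.map_sub _ (map_sub r1) _ _
      rw [hDr1, h1, hTr1] at h2
      exact (sub_eq_zero.mp h2.symm).symm
    set N := S1 * x₁ with hNdef
    have hNT : Nᵀ = x₁ᵀ * S1 := by rw [hNdef, transpose_mul, hS1symm.eq]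
    set P := T1⁻¹ * x₁ᵀ with hPdef
    have hPN : P * N = 1 := by
      rw [hPdef, hNdef, Matrix.mul_assoc, ← Matrix.mul_assoc x₁ᵀ S1 x₁, hsol1]
      exact Matrix.nonsing_inv_mul _ hT1u
    -- the key equivalence of conditions
    have key_iff : ∀ z : Matrix (Fin l) (Fin n) (ZMod p),
        ((x₀ + z.map (iotaF k))ᵀ * S' * (x₀ + z.map (iotaF k)) = T') ↔
          (zᵀ * N + Nᵀ * z = C) := by
      intro z
      set E := z.map (iotaF k) with hEdef
      have t1 : Eᵀ * S' * x₀ = (zᵀ * N).map (iotaF k) := by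
        rw [Matrix.mul_assoc, hEdef, mapIota_transpose_mul k hk z (S' * x₀)]
        congr 2
        rw [Matrix.map_mul, hSr1, hNdef, hx₁def]
      have t2 : x₀ᵀ * S' * E = (Nᵀ * z).map (iotaF k) := by
        rw [hEdef, mul_mapIota k hk (x₀ᵀ * S') z]
        congr 2
        rw [Matrix.map_mul, Matrix.transpose_map, hSr1, hNT, hx₁def]
      have t3 : Eᵀ * S' * E = 0 := by
        rw [Matrix.mul_assoc, hEdef, mul_mapIota k hk S' z,
          mapIota_transpose_mul k hk z _]
        have h0 : ((S'.map ⇑r1 * z).map (iotaF k)).map ⇑r1 = 0 := by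
          rw [Matrix.map_map]
          ext i j
          exact r1_iotaF k hk _
        rw [h0, Matrix.mul_zero]
        ext i j
        exact iotaF_zero k
      have expand : (x₀ + E)ᵀ * S' * (x₀ + E) =
          x₀ᵀ * S' * x₀ + ((zᵀ * N + Nᵀ * z).map (iotaF k)) := by
        have e1 : (x₀ + E)ᵀ * S' * (x₀ + E)
            = x₀ᵀ*S'*x₀ + (Eᵀ*S'*x₀ + (x₀ᵀ*S'*E + Eᵀ*S'*E)) := by
          rw [transpose_add, Matrix.add_mul, Matrix.mul_add, Matrix.add_mul, Matrix.add_mul]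
          abel
        rw [e1, t1, t2, t3, add_zero, ← mapIota_add k]
      rw [expand]
      constructor
      · intro h
        apply mapIota_inj k
        rw [hCι, hDdef]
        exact eq_sub_of_add_eq' h
      · intro h
        rw [h, hCι, hDdef]
        abel
    -- the bijection
    set Ψ : {z : Matrix (Fin l) (Fin n) (ZMod p) // zᵀ * N + Nᵀ * z = C} →
        {x // ρ x = xb} :=
      fun z => ⟨⟨x₀ + z.1.map (iotaF k), (key_iff z.1).mpr z.2⟩, by
        apply Subtype.ext
        show (x₀ + z.1.map (iotaF k)).map ⇑rk = xb.1
        rw [Matrix.map_add _ (map_add rk), hx₀rk]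
        have h0 : (z.1.map (iotaF k)).map ⇑rk = 0 := by
          rw [Matrix.map_map]
          ext i j
          exact rk_iotaF k _
        rw [h0, add_zero]⟩ with hΨdef
    have hbij : Function.Bijective Ψ := by
      constructor
      · rintro ⟨z, hz⟩ ⟨z', hz'⟩ h
        apply Subtype.ext
        have h1 : x₀ + z.map (iotaF k) = x₀ + z'.map (iotaF k) := by
          have := congrArg (fun t => t.1.1) h
          exact this
        exact mapIota_inj k (add_left_cancel h1)
      · rintro ⟨x, hx⟩
        have hErk : (x.1 - x₀).map ⇑rk = 0 := by
          rw [Matrix.map_sub _ (map_sub rk), hx₀rk]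
          have : x.1.map ⇑rk = xb.1 := congrArg Subtype.val hx
          rw [this, sub_self]
        have hEexists : ∀ i j, ∃ a : ZMod p, iotaF k a = (x.1 - x₀) i j := fun i j =>
          iotaF_surj_ker k _ (congrFun (congrFun hErk i) j)
        set z : Matrix (Fin l) (Fin n) (ZMod p) :=
          Matrix.of (fun i j => Classical.choose (hEexists i j)) with hzdef
        have hzι : z.map (iotaF k) = x.1 - x₀ := by
          ext i j
          exact Classical.choose_spec (hEexists i j)
        have hxeq : x.1 = x₀ + z.map (iotaF k) := by rw [hzι]; abel
        have hcond : zᵀ * N + Nᵀ * z = C := (key_iff z).mp (by rw [← hxeq]; exact x.2)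
        refine ⟨⟨z, hcond⟩, ?_⟩
        apply Subtype.ext
        apply Subtype.ext
        show x₀ + z.map (iotaF k) = x.1
        rw [hxeq]
    rw [← Nat.card_eq_of_bijective Ψ hbij]
    exact count_phi hp hs N P hPN C hCsymm
  -- sum the fibers
  rw [(Nat.card_congr (Equiv.sigmaFiberEquiv ρ)).symm, Nat.card_eq_fintype_card,
    Fintype.card_sigma]
  rw [Nat.card_eq_fintype_card]
  calc ∑ xb, Fintype.card {x // ρ x = xb}
      = ∑ xb : {x : Matrix (Fin l) (Fin n) (ZMod (p^k)) // xᵀ * Sk * x = Tk},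
        p ^ (n*l - n*(n+1)/2) := by
        refine Finset.sum_congr rfl fun xb _ => ?_
        rw [← Nat.card_eq_fintype_card]
        exact key xb
    _ = _ := by
        rw [Finset.sum_const, Finset.card_univ, smul_eq_mul, ← Nat.card_eq_fintype_card]



theorem card_sol_congr {l n : ℕ} {R R' : Type*} [CommRing R] [CommRing R'] (e : R ≃+* R')
    (A : Matrix (Fin l) (Fin l) R) (B : Matrix (Fin n) (Fin n) R) :
    Nat.card {x : Matrix (Fin l) (Fin n) R // xᵀ * A * x = B} =
      Nat.card {x : Matrix (Fin l) (Fin n) R' //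
        xᵀ * A.map ⇑e * x = B.map ⇑e} := by
  have hinj : ∀ {a b : ℕ} (M N : Matrix (Fin a) (Fin b) R), M.map ⇑e = N.map ⇑e → M = N := by
    intro a b M N h
    ext i j
    exact e.injective (congrFun (congrFun h i) j)
  apply Nat.card_congr
  refine Equiv.subtypeEquiv ⟨fun x => x.map ⇑e, fun y => y.map ⇑e.symm, ?_, ?_⟩ ?_
  · intro x; ext i j; exact e.symm_apply_apply _
  · intro y; ext i j; exact e.apply_symm_apply _
  · intro x
    have hL : (x.map ⇑e)ᵀ * A.map ⇑e * x.map ⇑e = (xᵀ * A * x).map ⇑e := by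
      have hco : ⇑e = ⇑e.toRingHom := rfl
      rw [hco]
      simp only [Matrix.map_mul, Matrix.transpose_map]
    show _ ↔ (x.map ⇑e)ᵀ * A.map ⇑e * x.map ⇑e = B.map ⇑e
    rw [hL]
    exact ⟨fun h => by rw [h], fun h => hinj _ _ h⟩

theorem sol_injective {p l n : ℕ} [Fact p.Prime] (A : Matrix (Fin l) (Fin l) (ZMod p))
    (B : Matrix (Fin n) (Fin n) (ZMod p)) (hBu : IsUnit B.det)
    (x : Matrix (Fin l) (Fin n) (ZMod p)) (hx : xᵀ * A * x = B) :
    Function.Injective x.mulVec := by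
  intro v w hvw
  have hB : B.mulVec v = B.mulVec w := by
    rw [← hx, ← Matrix.mulVec_mulVec, ← Matrix.mulVec_mulVec,
      ← Matrix.mulVec_mulVec, ← Matrix.mulVec_mulVec, hvw]
  have h1 : (B⁻¹ * B).mulVec v = (B⁻¹ * B).mulVec w := by
    rw [← Matrix.mulVec_mulVec, ← Matrix.mulVec_mulVec, hB]
  rwa [Matrix.nonsing_inv_mul _ hBu, Matrix.one_mulVec, Matrix.one_mulVec] at h1

theorem card_sol_inj {p l n : ℕ} [Fact p.Prime] (A : Matrix (Fin l) (Fin l) (ZMod p))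
    (B : Matrix (Fin n) (Fin n) (ZMod p)) (hBu : IsUnit B.det) :
    Nat.card {x : Matrix (Fin l) (Fin n) (ZMod p) // xᵀ * A * x = B} =
      Nat.card {x : Matrix (Fin l) (Fin n) (ZMod p) //
        xᵀ * A * x = B ∧ Function.Injective x.mulVec} :=
  Nat.card_congr (Equiv.subtypeEquivRight (fun x =>
    ⟨fun h => ⟨h, sol_injective A B hBu x h⟩, fun h => h.1⟩))



theorem base_card {p l n : ℕ} [Fact p.Prime]
    (S : Matrix (Fin l) (Fin l) ℤ_[p]) (T : Matrix (Fin n) (Fin n) ℤ_[p]) :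
    Nat.card {x : Matrix (Fin l) (Fin n) (ZMod (p^1)) //
        xᵀ * S.map (PadicInt.toZModPow 1) * x = T.map (PadicInt.toZModPow 1)} =
      Nat.card {x : Matrix (Fin l) (Fin n) (ZMod p) //
        xᵀ * S.map (PadicInt.toZMod) * x = T.map (PadicInt.toZMod)} := by
  have e : ZMod (p^1) ≃+* ZMod p := ZMod.ringEquivCongr (pow_one p)
  have hmap : ∀ {a b : ℕ} (M : Matrix (Fin a) (Fin b) ℤ_[p]),
      (M.map ⇑(PadicInt.toZModPow 1)).map ⇑e = M.map ⇑(PadicInt.toZMod) := by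
    intro a b M
    have h : (RingEquiv.toRingHom e).comp (PadicInt.toZModPow 1) = PadicInt.toZMod :=
      padic_hom_unique _ _
    rw [Matrix.map_map]
    ext i j
    exact DFunLike.congr_fun h (M i j)
  rw [card_sol_congr e, hmap S, hmap T]



end iota

end LocalDensityAux

open LocalDensityAux

/-- for `p` odd, `L` unimodular of rank `l` and `T ∈ Sym_n(ℤ_p)` unimodular
with `n ≤ l`, the local density satisfies
`α_p(1,T,L) = p^{n(n+1)/2 - nl} · #{isometric embeddings (𝔽_p^n, T) ↪ (L/pL, Q)}`. -/
theorem local_density_unimodular (p l n : ℕ) [Fact p.Prime] (hp : p ≠ 2) (hn : n ≤ l)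
    (S : Matrix (Fin l) (Fin l) ℤ_[p]) (hS : S.IsSymm) (hSdet : IsUnit S.det)
    (T : Matrix (Fin n) (Fin n) ℤ_[p]) (hT : T.IsSymm) (hTdet : IsUnit T.det) :
    Tendsto (localDensitySeq p S T) atTop
      (nhds ((p : ℝ) ^ ((n * (n + 1) / 2 : ℤ) - (n : ℤ) * l) *
        Nat.card {x : Matrix (Fin l) (Fin n) (ZMod p) //
          xᵀ * S.map PadicInt.toZMod * x = T.map PadicInt.toZMod ∧
            Function.Injective x.mulVec})) := by
  classical
  have hppos : 0 < p := (Fact.out (p := p.Prime)).pos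
  have hpR : (p : ℝ) ≠ 0 := by positivity
  have hs : n*(n+1)/2 ≤ n*l := by
    rcases Nat.eq_zero_or_pos n with h0 | h1
    · subst h0; simp
    · have hmul : n*(n+1) ≤ n*(2*l) := Nat.mul_le_mul_left n (by omega)
      have h2 : n*(2*l) = (n*l)*2 := by ring
      have h3 : n*(n+1)/2 ≤ n*(2*l)/2 := Nat.div_le_div_right hmul
      rwa [h2, Nat.mul_div_cancel _ (by norm_num)] at h3
  have hT1u : IsUnit (T.map (PadicInt.toZMod)).det := by
    have h := hTdet.map (PadicInt.toZMod (p := p))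
    rw [RingHom.map_det, RingHom.mapMatrix_apply] at h
    exact h
  -- cardinalities at every level
  have hNall : ∀ j : ℕ,
      Nat.card {x : Matrix (Fin l) (Fin n) (ZMod (p^(j+1))) //
        xᵀ * S.map (PadicInt.toZModPow (j+1)) * x = T.map (PadicInt.toZModPow (j+1))} =
      Nat.card {x : Matrix (Fin l) (Fin n) (ZMod p) //
          xᵀ * S.map PadicInt.toZMod * x = T.map PadicInt.toZMod ∧
            Function.Injective x.mulVec} * (p ^ (n*l - n*(n+1)/2))^j := by
    intro j
    induction j with
    | zero =>
      rw [pow_zero, mul_one, base_card S T,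
        card_sol_inj (S.map PadicInt.toZMod) (T.map PadicInt.toZMod) hT1u]
    | succ j ih =>
      rw [step_card hp hn S hS T hT hTdet (j+1) (by omega), ih, pow_succ, mul_assoc]
  -- the sequence is eventually constant
  have hconst : ∀ j : ℕ, localDensitySeq p S T (j+1) =
      (p : ℝ) ^ ((n * (n + 1) / 2 : ℤ) - (n : ℤ) * l) *
        Nat.card {x : Matrix (Fin l) (Fin n) (ZMod p) //
          xᵀ * S.map PadicInt.toZMod * x = T.map PadicInt.toZMod ∧
            Function.Injective x.mulVec} := by
    intro j
    show (p : ℝ) ^ (((j+1 : ℕ) : ℤ) * ((n * (n + 1) / 2 : ℤ) - (n : ℤ) * Fintype.card (Fin l))) *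
      Nat.card {x : Matrix (Fin l) (Fin n) (ZMod (p ^ (j+1))) //
        xᵀ * S.map (PadicInt.toZModPow (j+1)) * x = T.map (PadicInt.toZModPow (j+1))} = _
    rw [hNall j, Fintype.card_fin]
    set N1 : ℕ := Nat.card {x : Matrix (Fin l) (Fin n) (ZMod p) //
          xᵀ * S.map PadicInt.toZMod * x = T.map PadicInt.toZMod ∧
            Function.Injective x.mulVec}
    have hsI : ((n*(n+1)/2 : ℕ) : ℤ) = (n * (n + 1) / 2 : ℤ) := by
      rw [Int.natCast_ediv]
      push_cast
      ring_nf
    have hcast : ((N1 * (p ^ (n*l - n*(n+1)/2))^j : ℕ) : ℝ) =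
        (N1 : ℝ) * (p : ℝ) ^ ((((n:ℤ) * l - (n * (n + 1) / 2 : ℤ))) * j) := by
      push_cast
      rw [← zpow_natCast (p:ℝ) (n*l - n*(n+1)/2), ← zpow_natCast ((p:ℝ) ^ _) j, ← _root_.zpow_mul]
      congr 2
      rw [Nat.cast_sub hs, hsI]
      push_cast
      ring
    have hexp : (p:ℝ) ^ (((j+1:ℕ):ℤ) * ((n * (n + 1) / 2 : ℤ) - (n : ℤ) * l)) *
        (p:ℝ) ^ (((n:ℤ) * l - (n * (n + 1) / 2 : ℤ)) * j) =
        (p:ℝ) ^ ((n * (n + 1) / 2 : ℤ) - (n : ℤ) * l) := by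
      rw [← zpow_add₀ hpR]
      congr 1
      push_cast
      ring
    rw [hcast, mul_comm ((N1 : ℝ)) _, ← mul_assoc, hexp]
  have hev : (fun _ : ℕ => (p : ℝ) ^ ((n * (n + 1) / 2 : ℤ) - (n : ℤ) * l) *
        Nat.card {x : Matrix (Fin l) (Fin n) (ZMod p) //
          xᵀ * S.map PadicInt.toZMod * x = T.map PadicInt.toZMod ∧
            Function.Injective x.mulVec}) =ᶠ[atTop] localDensitySeq p S T := by
    filter_upwards [Filter.eventually_ge_atTop 1] with k hk
    obtain ⟨j, rfl⟩ : ∃ j, k = j+1 := ⟨k-1, by omega⟩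
    exact (hconst j).symm
  exact Filter.Tendsto.congr' hev tendsto_const_nhds
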